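/- Let d ≥ 3 be an integer and α = (d-1)/d. For an integer N ≥ 1 and 0 ≤ i ≤ N^d, define the Hardy constant B₊(N,i) = max over integers x with i < x ≤ N^d of ( ∑_{y=i+1}^{x} exp(y^α) (max(y,1))^{-α} ) · ( ∑_{y=x}^{N^d} exp(-y^α) ). Then there exists k = k(d) > 0 such that B₊(N,i) ≤ k for all N ≥ 1 and all 0 ≤ i < N^d, uniformly in N. -/

import Mathlib

/-!
Hardy constant `B₊` of the birth-and-death toy model in dimensions `d ≥ 3`
(`α = (d-1)/d`): it is bounded uniformly in `N` on the state space `{0,…,N^d}`.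
-/

noncomputable section

/-- The exponent `α = (d-1)/d`. -/
def alphaOf (d : ℕ) : ℝ := ((d : ℝ) - 1) / d

/-- The Hardy constant
`B₊(N,i) = max_{i < x ≤ N^d} (∑_{y=i+1}^x e^{y^α} (max(y,1))^{-α}) ·
(∑_{y=x}^{N^d} e^{-y^α})`. -/
def Bplus (d N i : ℕ) : ℝ :=
  sSup ((fun x : ℕ =>
      (∑ y ∈ Finset.Icc (i + 1) x,
        Real.exp ((y : ℝ) ^ alphaOf d) * ((max y 1 : ℕ) : ℝ) ^ (-alphaOf d)) *
      (∑ y ∈ Finset.Icc x (N ^ d), Real.exp (-(y : ℝ) ^ alphaOf d))) ''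
    {x : ℕ | i < x ∧ x ≤ N ^ d})

namespace BplusProofAux

/-- Bernoulli-type decrement: `(t-1)^α ≤ t^α - α t^(α-1)` for `0 ≤ α ≤ 1`, `t ≥ 1`. -/
lemma bern {α t : ℝ} (h0 : 0 ≤ α) (h1 : α ≤ 1) (ht : 1 ≤ t) :
    (t - 1) ^ α ≤ t ^ α - α * t ^ (α - 1) := by
  have ht0 : (0:ℝ) < t := lt_of_lt_of_le one_pos ht
  have hdiv : 1 / t ≤ 1 := by rw [div_le_one ht0]; exact ht
  have h1t : (-1:ℝ) ≤ -(1/t) := by linarith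
  have hb : (1 + -(1/t)) ^ α ≤ 1 + α * -(1/t) :=
    rpow_one_add_le_one_add_mul_self h1t h0 h1
  have he : t - 1 = t * (1 + -(1/t)) := by field_simp; ring
  have hnn : (0:ℝ) ≤ 1 + -(1/t) := by linarith
  calc (t-1)^α = t^α * (1 + -(1/t))^α := by
        rw [he, Real.mul_rpow ht0.le hnn]
    _ ≤ t^α * (1 + α * -(1/t)) :=
        mul_le_mul_of_nonneg_left hb (Real.rpow_nonneg ht0.le _)
    _ = t^α - α * (t^α / t) := by ring
    _ = t^α - α * t^(α-1) := by rw [Real.rpow_sub_one ht0.ne']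

lemma one_sub_exp_neg {u : ℝ} (h0 : 0 ≤ u) (h1 : u ≤ 1) :
    u * Real.exp (-1) ≤ 1 - Real.exp (-u) := by
  have h2 : (1 + u) * Real.exp (-u) ≤ 1 := by
    have hb := Real.add_one_le_exp u
    have hp := (Real.exp_pos (-u)).le
    have h3 : (1 + u) * Real.exp (-u) ≤ Real.exp u * Real.exp (-u) := by
      apply mul_le_mul_of_nonneg_right (by linarith) hp
    rwa [← Real.exp_add, add_neg_cancel, Real.exp_zero] at h3
  have h3 : Real.exp (-1) ≤ Real.exp (-u) := Real.exp_le_exp.2 (by linarith)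
  nlinarith [mul_le_mul_of_nonneg_left h3 h0]

/-- Common ending: if `B ≤ A e^{-w}`, `0 ≤ w ≤ 1`, `c ≤ w`, then
`A c e^{-1} ≤ A - B`. -/
lemma ending {A B w c : ℝ} (hA : 0 ≤ A) (hkey : B ≤ A * Real.exp (-w))
    (hw0 : 0 ≤ w) (hw1 : w ≤ 1) (hlb : c ≤ w) :
    A * c * Real.exp (-1) ≤ A - B := by
  have e1 : A * (1 - Real.exp (-w)) ≤ A - B := by nlinarith
  have e2 : A * (w * Real.exp (-1)) ≤ A * (1 - Real.exp (-w)) :=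
    mul_le_mul_of_nonneg_left (one_sub_exp_neg hw0 hw1) hA
  have e3 : A * (c * Real.exp (-1)) ≤ A * (w * Real.exp (-1)) :=
    mul_le_mul_of_nonneg_left
      (mul_le_mul_of_nonneg_right hlb (Real.exp_pos _).le) hA
  nlinarith

lemma cube_le {a b : ℝ} (ha : 0 ≤ a) (hb : 0 ≤ b) (h : a^(3:ℕ) ≤ b^(3:ℕ)) : a ≤ b :=
  le_of_pow_le_pow_left₀ (by norm_num) hb h

/-- Pointwise inequality for the tail sum `S₂`. -/
lemma step2 {α t : ℝ} (h23 : 2/3 ≤ α) (h1 : α < 1) (ht : 1 ≤ t) :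
    Real.exp (-t ^ α) ≤ 30 * Real.exp 1 *
      ((t+1) ^ (1-α) * Real.exp (-t ^ α) - (t+2) ^ (1-α) * Real.exp (-(t+1) ^ α)) := by
  have hα0 : (0:ℝ) < α := by linarith
  have ht0 : (0:ℝ) < t := by linarith
  have ht1 : (0:ℝ) < t + 1 := by linarith
  set P : ℝ := (t+1)^(α-1) with hP
  set u : ℝ := α * P - 1/(t+1) with hu
  have hPpos : 0 < P := Real.rpow_pos_of_pos ht1 _
  have hP1 : P ≤ 1 := Real.rpow_le_one_of_one_le_of_nonpos (by linarith) (by linarith)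
  -- (t+1)^(-α) ≤ 19/30
  have h2a : (t+1)^(-α) ≤ (2:ℝ)^(-α) :=
    Real.rpow_le_rpow_of_nonpos two_pos (by linarith) (by linarith)
  have h2b : (2:ℝ)^(-α) ≤ (2:ℝ)^(-(2/3):ℝ) :=
    Real.rpow_le_rpow_of_exponent_le one_le_two (by linarith)
  have h2c : (2:ℝ)^(-(2/3):ℝ) ≤ 19/30 := by
    apply cube_le (Real.rpow_nonneg (by norm_num) _) (by norm_num)
    have hc : ((2:ℝ)^(-(2/3):ℝ))^(3:ℕ) = (2:ℝ)^((-(2/3):ℝ)*(3:ℕ)) := by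
      rw [← Real.rpow_natCast ((2:ℝ)^(-(2/3):ℝ)) 3,
        ← Real.rpow_mul (by norm_num : (0:ℝ) ≤ 2)]
    rw [hc, show ((-(2/3):ℝ)*(3:ℕ)) = ((-2 : ℤ) : ℝ) by push_cast; ring,
      Real.rpow_intCast]
    norm_num
  have h19 : (t+1)^(-α) ≤ 19/30 := le_trans h2a (le_trans h2b h2c)
  have hpow1 : P * (t+1)^(-α) = 1/(t+1) := by
    rw [hP, ← Real.rpow_add ht1, show α - 1 + -α = (-1:ℝ) by ring, Real.rpow_neg_one,
      one_div]
  have hu_lb : (1/30) * P ≤ u := by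
    rw [hu, ← hpow1]
    nlinarith [mul_le_mul_of_nonneg_left h19 hPpos.le,
      mul_le_mul_of_nonneg_right h23 hPpos.le]
  have hu_ub : u ≤ 1 := by
    have hq : 0 < 1/(t+1) := by positivity
    have hle : α * P ≤ 1 := mul_le_one₀ h1.le hPpos.le hP1
    rw [hu]; linarith
  have hu0 : 0 ≤ u := le_trans (by positivity) hu_lb
  -- key comparison
  have hsplit : (t+2)^(1-α) ≤ (t+1)^(1-α) * Real.exp (1/(t+1)) := by
    have h2 : t+2 = (t+1) * ((t+2)/(t+1)) := by field_simp
    have hr1 : (1:ℝ) ≤ (t+2)/(t+1) := by rw [le_div_iff₀ ht1]; linarith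
    have hr2 : ((t+2)/(t+1))^(1-α) ≤ (t+2)/(t+1) := by
      calc ((t+2)/(t+1))^(1-α) ≤ ((t+2)/(t+1))^(1:ℝ) :=
            Real.rpow_le_rpow_of_exponent_le hr1 (by linarith)
        _ = (t+2)/(t+1) := Real.rpow_one _
    have hr3 : (t+2)/(t+1) ≤ Real.exp (1/(t+1)) := by
      have hb := Real.add_one_le_exp (1/(t+1))
      have he : (t+2)/(t+1) = 1/(t+1) + 1 := by field_simp; ring
      linarith
    calc (t+2)^(1-α) = (t+1)^(1-α) * ((t+2)/(t+1))^(1-α) := by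
          rw [← Real.mul_rpow ht1.le (by positivity), ← h2]
      _ ≤ (t+1)^(1-α) * Real.exp (1/(t+1)) :=
          mul_le_mul_of_nonneg_left (le_trans hr2 hr3) (Real.rpow_nonneg ht1.le _)
  have hexp2 : Real.exp (-(t+1)^α) ≤ Real.exp (-t^α - α * P) := by
    rw [Real.exp_le_exp]
    have hb := bern (α := α) hα0.le h1.le (t := t+1) (by linarith)
    have he : t + 1 - 1 = t := by ring
    rw [he] at hb
    rw [hP]; linarith
  have hkey : (t+2)^(1-α) * Real.exp (-(t+1)^α) ≤
      ((t+1)^(1-α) * Real.exp (-t^α)) * Real.exp (-u) := by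
    calc (t+2)^(1-α) * Real.exp (-(t+1)^α)
        ≤ ((t+1)^(1-α) * Real.exp (1/(t+1))) * Real.exp (-t^α - α * P) := by
          apply mul_le_mul hsplit hexp2 (Real.exp_pos _).le (by positivity)
      _ = (t+1)^(1-α) * Real.exp (1/(t+1) + (-t^α - α * P)) := by
          rw [mul_assoc, ← Real.exp_add]
      _ = (t+1)^(1-α) * Real.exp (-t^α + -u) := by rw [hu]; ring_nf
      _ = ((t+1)^(1-α) * Real.exp (-t^α)) * Real.exp (-u) := by
          rw [Real.exp_add]; ring
  have hQP : (t+1)^(1-α) * P = 1 := by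
    rw [hP, ← Real.rpow_add ht1, show (1-α) + (α-1) = (0:ℝ) by ring, Real.rpow_zero]
  have hend := ending (A := (t+1)^(1-α) * Real.exp (-t^α))
    (B := (t+2)^(1-α) * Real.exp (-(t+1)^α)) (w := u) (c := (1/30) * P)
    (by positivity) hkey hu0 hu_ub hu_lb
  have hval : (t+1)^(1-α) * Real.exp (-t^α) * ((1/30) * P) * Real.exp (-1)
      = Real.exp (-t^α) * (1/30) * Real.exp (-1) := by
    calc (t+1)^(1-α) * Real.exp (-t^α) * ((1/30) * P) * Real.exp (-1)
        = ((t+1)^(1-α) * P) * (Real.exp (-t^α) * (1/30) * Real.exp (-1)) := by ring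
      _ = Real.exp (-t^α) * (1/30) * Real.exp (-1) := by rw [hQP, one_mul]
  rw [hval] at hend
  have hone : Real.exp (-1) * Real.exp 1 = 1 := by
    rw [← Real.exp_add]; norm_num
  nlinarith [mul_le_mul_of_nonneg_left hend
    (by positivity : (0:ℝ) ≤ 30 * Real.exp 1), Real.exp_pos (-t^α)]

/-- Pointwise inequality for the weighted sum `S₁`. -/
lemma step1 {α t : ℝ} (h23 : 2/3 ≤ α) (h1 : α < 1) (ht : 15 ≤ t) :
    Real.exp (t ^ α) * t^(-α) ≤ 3 * Real.exp 1 *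
      (t^(1-2*α) * Real.exp (t^α) - (t-1)^(1-2*α) * Real.exp ((t-1)^α)) := by
  have hα0 : (0:ℝ) < α := by linarith
  have ht0 : (0:ℝ) < t := by linarith
  have ht2 : (2:ℝ) ≤ t := by linarith
  have hs0 : (0:ℝ) < t - 1 := by linarith
  set P : ℝ := t^(α-1) with hP
  set v : ℝ := α * P - 2/t with hv
  have hPpos : 0 < P := Real.rpow_pos_of_pos ht0 _
  have hP1 : P ≤ 1 := Real.rpow_le_one_of_one_le_of_nonpos (by linarith) (by linarith)
  -- t^(-α) ≤ 1/6
  have h6a : t^(-α) ≤ t^(-(2/3):ℝ) :=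
    Real.rpow_le_rpow_of_exponent_le (by linarith) (by linarith)
  have h6b : t^(-(2/3):ℝ) ≤ (15:ℝ)^(-(2/3):ℝ) :=
    Real.rpow_le_rpow_of_nonpos (by norm_num) ht (by norm_num)
  have h6c : (15:ℝ)^(-(2/3):ℝ) ≤ 1/6 := by
    apply cube_le (Real.rpow_nonneg (by norm_num) _) (by norm_num)
    have hc : ((15:ℝ)^(-(2/3):ℝ))^(3:ℕ) = (15:ℝ)^((-(2/3):ℝ)*(3:ℕ)) := by
      rw [← Real.rpow_natCast ((15:ℝ)^(-(2/3):ℝ)) 3,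
        ← Real.rpow_mul (by norm_num : (0:ℝ) ≤ 15)]
    rw [hc, show ((-(2/3):ℝ)*(3:ℕ)) = ((-2 : ℤ) : ℝ) by push_cast; ring,
      Real.rpow_intCast]
    norm_num
  have h6 : t^(-α) ≤ 1/6 := le_trans h6a (le_trans h6b h6c)
  have hpow1 : P * t^(-α) = 1/t := by
    rw [hP, ← Real.rpow_add ht0, show α - 1 + -α = (-1:ℝ) by ring, Real.rpow_neg_one,
      one_div]
  have hv_lb : (1/3) * P ≤ v := by
    have h2t : 2/t = 2 * (P * t^(-α)) := by rw [hpow1]; ring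
    rw [hv, h2t]
    nlinarith [mul_le_mul_of_nonneg_left h6 hPpos.le,
      mul_le_mul_of_nonneg_right h23 hPpos.le]
  have hv_ub : v ≤ 1 := by
    have hq : 0 < 2/t := by positivity
    have hle : α * P ≤ 1 := mul_le_one₀ h1.le hPpos.le hP1
    rw [hv]; linarith
  have hv0 : 0 ≤ v := le_trans (by positivity) hv_lb
  -- (t-1)^(1-2α) ≤ t^(1-2α) * exp (2/t)
  have hfac : (t-1)^(1-2*α) ≤ t^(1-2*α) * Real.exp (2/t) := by
    have hb0 : (0:ℝ) < (t-1)/t := by positivity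
    have hb1 : (t-1)/t ≤ 1 := by rw [div_le_one ht0]; linarith
    have he : t - 1 = t * ((t-1)/t) := by field_simp
    have hr2 : ((t-1)/t)^(1-2*α) ≤ ((t-1)/t)^(-1:ℝ) :=
      Real.rpow_le_rpow_of_exponent_ge hb0 hb1 (by linarith)
    have hr3 : ((t-1)/t)^(-1:ℝ) = t/(t-1) := by
      rw [Real.rpow_neg_one, inv_div]
    have hr4 : t/(t-1) ≤ Real.exp (2/t) := by
      have hb := Real.add_one_le_exp (1/(t-1))
      have he2 : t/(t-1) = 1/(t-1) + 1 := by field_simp; ring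
      have he3 : 1/(t-1) ≤ 2/t := by
        rw [div_le_div_iff₀ hs0 ht0]; linarith
      have he4 : Real.exp (1/(t-1)) ≤ Real.exp (2/t) := Real.exp_le_exp.2 he3
      linarith
    calc (t-1)^(1-2*α) = t^(1-2*α) * ((t-1)/t)^(1-2*α) := by
          rw [← Real.mul_rpow ht0.le hb0.le, ← he]
      _ ≤ t^(1-2*α) * Real.exp (2/t) := by
          apply mul_le_mul_of_nonneg_left _ (Real.rpow_nonneg ht0.le _)
          calc ((t-1)/t)^(1-2*α) ≤ ((t-1)/t)^(-1:ℝ) := hr2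
            _ = t/(t-1) := hr3
            _ ≤ Real.exp (2/t) := hr4
  have hbern : (t-1)^α ≤ t^α - α * P := by
    have hb := bern (α := α) hα0.le h1.le (t := t) (by linarith)
    rw [hP]; linarith
  have hkey : (t-1)^(1-2*α) * Real.exp ((t-1)^α) ≤
      (t^(1-2*α) * Real.exp (t^α)) * Real.exp (-v) := by
    calc (t-1)^(1-2*α) * Real.exp ((t-1)^α)
        ≤ (t^(1-2*α) * Real.exp (2/t)) * Real.exp (t^α - α * P) := by
          apply mul_le_mul hfac (Real.exp_le_exp.2 hbern) (Real.exp_pos _).le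
            (by positivity)
      _ = t^(1-2*α) * Real.exp (2/t + (t^α - α * P)) := by
          rw [mul_assoc, ← Real.exp_add]
      _ = t^(1-2*α) * Real.exp (t^α + -v) := by rw [hv]; ring_nf
      _ = (t^(1-2*α) * Real.exp (t^α)) * Real.exp (-v) := by
          rw [Real.exp_add]; ring
  have hQP : t^(1-2*α) * P = t^(-α) := by
    rw [hP, ← Real.rpow_add ht0, show (1-2*α) + (α-1) = -α by ring]
  have hend := ending (A := t^(1-2*α) * Real.exp (t^α))
    (B := (t-1)^(1-2*α) * Real.exp ((t-1)^α)) (w := v) (c := (1/3) * P)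
    (by positivity) hkey hv0 hv_ub hv_lb
  have hval : t^(1-2*α) * Real.exp (t^α) * ((1/3) * P) * Real.exp (-1)
      = Real.exp (t^α) * t^(-α) * (1/3) * Real.exp (-1) := by
    calc t^(1-2*α) * Real.exp (t^α) * ((1/3) * P) * Real.exp (-1)
        = (t^(1-2*α) * P) * (Real.exp (t^α) * (1/3) * Real.exp (-1)) := by ring
      _ = Real.exp (t^α) * t^(-α) * (1/3) * Real.exp (-1) := by rw [hQP]; ring
  rw [hval] at hend
  have hone : Real.exp (-1) * Real.exp 1 = 1 := by
    rw [← Real.exp_add]; norm_num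
  nlinarith [mul_le_mul_of_nonneg_left hend
    (by positivity : (0:ℝ) ≤ 3 * Real.exp 1),
    mul_pos (Real.exp_pos (t^α)) (Real.rpow_pos_of_pos ht0 (-α))]

/-- Telescoping over `Icc` (forward differences). -/
lemma tele_sub (f : ℕ → ℝ) : ∀ b a : ℕ, a ≤ b + 1 →
    ∑ y ∈ Finset.Icc a b, (f y - f (y+1)) = f a - f (b+1) := by
  intro b
  induction b with
  | zero =>
    intro a ha
    interval_cases a <;> simp
  | succ b ih =>
    intro a ha
    rcases Nat.lt_or_ge a (b+2) with h | h
    · have h' : a ≤ b + 1 := by omega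
      rw [← Finset.insert_Icc_right_eq_Icc_add_one h',
        Finset.sum_insert (by simp), ih a h']
      ring
    · have he : a = b + 2 := by omega
      subst he
      rw [Finset.Icc_eq_empty (by omega), Finset.sum_empty]
      simp

/-- Telescoping over `Icc` (backward differences). -/
lemma tele_sub' (g : ℕ → ℝ) : ∀ b a : ℕ, 1 ≤ a → a ≤ b + 1 →
    ∑ y ∈ Finset.Icc a b, (g y - g (y-1)) = g b - g (a-1) := by
  intro b
  induction b with
  | zero =>
    intro a h1 h2
    have : a = 1 := by omega
    subst this
    rw [Finset.Icc_eq_empty (by omega), Finset.sum_empty]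
    simp
  | succ b ih =>
    intro a h1 h2
    rcases Nat.lt_or_ge a (b+2) with h | h
    · have h' : a ≤ b + 1 := by omega
      rw [← Finset.insert_Icc_right_eq_Icc_add_one h',
        Finset.sum_insert (by simp), ih a h1 h']
      rw [Nat.add_sub_cancel]
      ring
    · have he : a = b + 2 := by omega
      subst he
      rw [Finset.Icc_eq_empty (by omega), Finset.sum_empty]
      rw [show b + 2 - 1 = b + 1 by omega]
      simp

/-- The comparison function for `S₂`. -/
def fS2 (α : ℝ) (y : ℕ) : ℝ := ((y:ℝ)+1)^(1-α) * Real.exp (-(y:ℝ)^α)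

/-- The comparison function for `S₁`. -/
def gS1 (α : ℝ) (y : ℕ) : ℝ := (y:ℝ)^(1-2*α) * Real.exp ((y:ℝ)^α)

lemma fS2_nonneg (α : ℝ) (y : ℕ) : 0 ≤ fS2 α y := by
  unfold fS2; positivity

lemma gS1_nonneg (α : ℝ) (y : ℕ) : 0 ≤ gS1 α y := by
  unfold gS1
  exact mul_nonneg (Real.rpow_nonneg (Nat.cast_nonneg y) _) (Real.exp_pos _).le

/-- Tail sum bound `S₂(x) ≤ 30 e (x+1)^{1-α} e^{-x^α}`. -/
lemma sum2_le {α : ℝ} (h23 : 2/3 ≤ α) (h1 : α < 1) (x M : ℕ) (hx : 1 ≤ x) :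
    ∑ y ∈ Finset.Icc x M, Real.exp (-(y:ℝ)^α) ≤
      30 * Real.exp 1 * fS2 α x := by
  have hterm : ∀ y ∈ Finset.Icc x M,
      Real.exp (-(y:ℝ)^α) ≤ 30 * Real.exp 1 * (fS2 α y - fS2 α (y+1)) := by
    intro y hy
    have hy1 : 1 ≤ y := le_trans hx (Finset.mem_Icc.mp hy).1
    have hy1' : (1:ℝ) ≤ (y:ℝ) := by exact_mod_cast hy1
    have hstep := step2 (α := α) h23 h1 hy1'
    have hcast : fS2 α (y+1) = ((y:ℝ)+2)^(1-α) * Real.exp (-((y:ℝ)+1)^α) := by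
      unfold fS2
      push_cast
      rw [show (y:ℝ)+1+1 = (y:ℝ)+2 by ring]
    rw [hcast]
    exact hstep
  calc ∑ y ∈ Finset.Icc x M, Real.exp (-(y:ℝ)^α)
      ≤ ∑ y ∈ Finset.Icc x M, 30 * Real.exp 1 * (fS2 α y - fS2 α (y+1)) :=
        Finset.sum_le_sum hterm
    _ = 30 * Real.exp 1 * ∑ y ∈ Finset.Icc x M, (fS2 α y - fS2 α (y+1)) := by
        rw [Finset.mul_sum]
    _ ≤ 30 * Real.exp 1 * fS2 α x := by
        apply mul_le_mul_of_nonneg_left _ (by positivity)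
        rcases le_or_gt x M with h | h
        · rw [tele_sub (fS2 α) M x (by omega)]
          have := fS2_nonneg α (M+1)
          linarith
        · rw [Finset.Icc_eq_empty (by omega), Finset.sum_empty]
          exact fS2_nonneg α x

/-- Weighted sum bound `S₁(x) ≤ 14 e^{14} + 3 e x^{1-2α} e^{x^α}`. -/
lemma sum1_le {α : ℝ} (h23 : 2/3 ≤ α) (h1 : α < 1) (i x : ℕ) :
    ∑ y ∈ Finset.Icc (i+1) x,
        Real.exp ((y:ℝ)^α) * ((max y 1 : ℕ) : ℝ)^(-α) ≤
      14 * Real.exp 14 + 3 * Real.exp 1 * gS1 α x := by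
  have hα0 : (0:ℝ) < α := by linarith
  have hnn : ∀ y : ℕ, 0 ≤ Real.exp ((y:ℝ)^α) * ((max y 1 : ℕ) : ℝ)^(-α) := by
    intro y
    exact mul_nonneg (Real.exp_pos _).le (Real.rpow_nonneg (Nat.cast_nonneg _) _)
  classical
  rw [← Finset.sum_filter_add_sum_filter_not (Finset.Icc (i+1) x) (fun y => y ≤ 14)]
  have hA : ∑ y ∈ (Finset.Icc (i+1) x).filter (fun y => y ≤ 14),
      Real.exp ((y:ℝ)^α) * ((max y 1 : ℕ) : ℝ)^(-α) ≤ 14 * Real.exp 14 := by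
    have hbd : ∀ y ∈ (Finset.Icc (i+1) x).filter (fun y => y ≤ 14),
        Real.exp ((y:ℝ)^α) * ((max y 1 : ℕ) : ℝ)^(-α) ≤ Real.exp 14 := by
      intro y hy
      rw [Finset.mem_filter, Finset.mem_Icc] at hy
      have hy1 : 1 ≤ y := by omega
      have hy14 : y ≤ 14 := hy.2
      have hmax : max y 1 = y := max_eq_left hy1
      have hy1' : (1:ℝ) ≤ (y:ℝ) := by exact_mod_cast hy1
      have hy14' : (y:ℝ) ≤ 14 := by exact_mod_cast hy14
      have he1 : (y:ℝ)^α ≤ 14 := by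
        calc (y:ℝ)^α ≤ (y:ℝ)^(1:ℝ) :=
              Real.rpow_le_rpow_of_exponent_le hy1' h1.le
          _ = (y:ℝ) := Real.rpow_one _
          _ ≤ 14 := hy14'
      have he2 : ((max y 1 : ℕ) : ℝ)^(-α) ≤ 1 := by
        rw [hmax]
        exact Real.rpow_le_one_of_one_le_of_nonpos hy1' (by linarith)
      calc Real.exp ((y:ℝ)^α) * ((max y 1 : ℕ) : ℝ)^(-α)
          ≤ Real.exp 14 * 1 := by
            apply mul_le_mul (Real.exp_le_exp.2 he1) he2
              (Real.rpow_nonneg (Nat.cast_nonneg _) _) (Real.exp_pos _).le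
        _ = Real.exp 14 := mul_one _
    calc ∑ y ∈ (Finset.Icc (i+1) x).filter (fun y => y ≤ 14),
        Real.exp ((y:ℝ)^α) * ((max y 1 : ℕ) : ℝ)^(-α)
        ≤ ((Finset.Icc (i+1) x).filter (fun y => y ≤ 14)).card • Real.exp 14 :=
          Finset.sum_le_card_nsmul _ _ _ hbd
      _ ≤ 14 * Real.exp 14 := by
          rw [nsmul_eq_mul]
          apply mul_le_mul_of_nonneg_right _ (Real.exp_pos _).le
          have hsub : (Finset.Icc (i+1) x).filter (fun y => y ≤ 14) ⊆
              Finset.Icc 1 14 := by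
            intro y hy
            rw [Finset.mem_filter, Finset.mem_Icc] at hy
            rw [Finset.mem_Icc]
            omega
          have := Finset.card_le_card hsub
          rw [Nat.card_Icc] at this
          exact_mod_cast le_trans this (by norm_num)
  have hB : ∑ y ∈ (Finset.Icc (i+1) x).filter (fun y => ¬ y ≤ 14),
      Real.exp ((y:ℝ)^α) * ((max y 1 : ℕ) : ℝ)^(-α) ≤ 3 * Real.exp 1 * gS1 α x := by
    have hsub : (Finset.Icc (i+1) x).filter (fun y => ¬ y ≤ 14) ⊆
        Finset.Icc 15 x := by
      intro y hy
      rw [Finset.mem_filter, Finset.mem_Icc] at hy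
      rw [Finset.mem_Icc]
      omega
    have h15 : ∑ y ∈ (Finset.Icc (i+1) x).filter (fun y => ¬ y ≤ 14),
        Real.exp ((y:ℝ)^α) * ((max y 1 : ℕ) : ℝ)^(-α) ≤
        ∑ y ∈ Finset.Icc 15 x, Real.exp ((y:ℝ)^α) * ((max y 1 : ℕ) : ℝ)^(-α) :=
      Finset.sum_le_sum_of_subset_of_nonneg hsub (fun y _ _ => hnn y)
    have hterm : ∀ y ∈ Finset.Icc 15 x,
        Real.exp ((y:ℝ)^α) * ((max y 1 : ℕ) : ℝ)^(-α) ≤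
          3 * Real.exp 1 * (gS1 α y - gS1 α (y-1)) := by
      intro y hy
      rw [Finset.mem_Icc] at hy
      have hy15 : 15 ≤ y := hy.1
      have hy15' : (15:ℝ) ≤ (y:ℝ) := by exact_mod_cast hy15
      have hmax : max y 1 = y := max_eq_left (by omega)
      have hstep := step1 (α := α) h23 h1 hy15'
      have hcast : gS1 α (y-1) = ((y:ℝ)-1)^(1-2*α) * Real.exp (((y:ℝ)-1)^α) := by
        unfold gS1
        rw [Nat.cast_sub (by omega : 1 ≤ y), Nat.cast_one]
      rw [hmax, hcast]
      exact hstep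
    calc ∑ y ∈ (Finset.Icc (i+1) x).filter (fun y => ¬ y ≤ 14),
        Real.exp ((y:ℝ)^α) * ((max y 1 : ℕ) : ℝ)^(-α)
        ≤ ∑ y ∈ Finset.Icc 15 x,
            Real.exp ((y:ℝ)^α) * ((max y 1 : ℕ) : ℝ)^(-α) := h15
      _ ≤ ∑ y ∈ Finset.Icc 15 x, 3 * Real.exp 1 * (gS1 α y - gS1 α (y-1)) :=
          Finset.sum_le_sum hterm
      _ = 3 * Real.exp 1 * ∑ y ∈ Finset.Icc 15 x, (gS1 α y - gS1 α (y-1)) := by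
          rw [Finset.mul_sum]
      _ ≤ 3 * Real.exp 1 * gS1 α x := by
          apply mul_le_mul_of_nonneg_left _ (by positivity)
          rcases le_or_gt 15 x with h | h
          · rw [tele_sub' (gS1 α) x 15 (by omega) (by omega)]
            have := gS1_nonneg α 14
            linarith
          · rw [Finset.Icc_eq_empty (by omega), Finset.sum_empty]
            exact gS1_nonneg α x
  linarith

lemma aux1 {α x : ℝ} (h23 : 2/3 ≤ α) (h1 : α < 1) (hx : 1 ≤ x) :
    (x+1)^(1-α) * Real.exp (-x^α) ≤ 2 := by
  have hx0 : (0:ℝ) < x := by linarith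
  have e1 : (x+1)^(1-α) ≤ 2 * x^α := by
    have h2 : (2:ℝ)^(1-α) ≤ 2 := by
      calc (2:ℝ)^(1-α) ≤ (2:ℝ)^(1:ℝ) :=
            Real.rpow_le_rpow_of_exponent_le one_le_two (by linarith)
        _ = 2 := Real.rpow_one 2
    have h3 : x^(1-α) ≤ x^α := Real.rpow_le_rpow_of_exponent_le hx (by linarith)
    calc (x+1)^(1-α) ≤ (2*x)^(1-α) :=
          Real.rpow_le_rpow (by linarith) (by linarith) (by linarith)
      _ = 2^(1-α) * x^(1-α) := Real.mul_rpow (by norm_num) hx0.le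
      _ ≤ 2 * x^α := by
          have := mul_le_mul h2 h3 (Real.rpow_nonneg hx0.le _) (by norm_num)
          linarith
  have e2 : x^α * Real.exp (-x^α) ≤ 1 := by
    have hb : x^α ≤ Real.exp (x^α) := by linarith [Real.add_one_le_exp (x^α)]
    calc x^α * Real.exp (-x^α) = x^α / Real.exp (x^α) := by
          rw [Real.exp_neg]; ring
      _ ≤ 1 := (div_le_one (Real.exp_pos _)).2 hb
  have e3 : (x+1)^(1-α) * Real.exp (-x^α) ≤ (2 * x^α) * Real.exp (-x^α) :=
    mul_le_mul_of_nonneg_right e1 (Real.exp_pos _).le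
  nlinarith

lemma aux2 {α x : ℝ} (h23 : 2/3 ≤ α) (h1 : α < 1) (hx : 1 ≤ x) :
    (x^(1-2*α) * Real.exp (x^α)) * ((x+1)^(1-α) * Real.exp (-x^α)) ≤ 2 := by
  have hx0 : (0:ℝ) < x := by linarith
  have hee : Real.exp (x^α) * Real.exp (-x^α) = 1 := by
    rw [← Real.exp_add]; simp
  have e1 : (x+1)^(1-α) ≤ 2 * x^(1-α) := by
    have h2 : (2:ℝ)^(1-α) ≤ 2 := by
      calc (2:ℝ)^(1-α) ≤ (2:ℝ)^(1:ℝ) :=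
            Real.rpow_le_rpow_of_exponent_le one_le_two (by linarith)
        _ = 2 := Real.rpow_one 2
    calc (x+1)^(1-α) ≤ (2*x)^(1-α) :=
          Real.rpow_le_rpow (by linarith) (by linarith) (by linarith)
      _ = 2^(1-α) * x^(1-α) := Real.mul_rpow (by norm_num) hx0.le
      _ ≤ 2 * x^(1-α) :=
          mul_le_mul_of_nonneg_right h2 (Real.rpow_nonneg hx0.le _)
  have e2 : x^(1-2*α) * x^(1-α) ≤ 1 := by
    rw [← Real.rpow_add hx0]
    exact Real.rpow_le_one_of_one_le_of_nonpos hx (by linarith)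
  have hxp : 0 ≤ x^(1-2*α) := Real.rpow_nonneg hx0.le _
  calc (x^(1-2*α) * Real.exp (x^α)) * ((x+1)^(1-α) * Real.exp (-x^α))
      = (x^(1-2*α) * (x+1)^(1-α)) * (Real.exp (x^α) * Real.exp (-x^α)) := by ring
    _ = x^(1-2*α) * (x+1)^(1-α) := by rw [hee, mul_one]
    _ ≤ x^(1-2*α) * (2 * x^(1-α)) := mul_le_mul_of_nonneg_left e1 hxp
    _ = 2 * (x^(1-2*α) * x^(1-α)) := by ring
    _ ≤ 2 := by linarith

end BplusProofAux

open BplusProofAux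

/-- For every `d ≥ 3` there is `k = k(d) > 0` such that `B₊(N,i) ≤ k` for all
`N ≥ 1` and all `0 ≤ i < N^d`, uniformly in `N`. -/
theorem Bplus_bounded_high_dim (d : ℕ) (hd : 3 ≤ d) :
    ∃ k : ℝ, 0 < k ∧ ∀ N : ℕ, 1 ≤ N → ∀ i : ℕ, i < N ^ d → Bplus d N i ≤ k := by
  refine ⟨840 * Real.exp 15 + 180 * Real.exp 2, by positivity, ?_⟩
  intro N hN i hi
  unfold Bplus
  apply Real.sSup_le _ (by positivity)
  rintro b ⟨x, ⟨hix, hxM⟩, rfl⟩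
  dsimp only
  set α := alphaOf d with hα
  have hd3 : (3:ℝ) ≤ (d:ℝ) := by exact_mod_cast hd
  have h23 : 2/3 ≤ α := by
    rw [hα, alphaOf, le_div_iff₀ (by linarith)]
    linarith
  have h1 : α < 1 := by
    rw [hα, alphaOf, div_lt_one (by linarith)]
    linarith
  have hx1 : 1 ≤ x := by omega
  have hx1' : (1:ℝ) ≤ (x:ℝ) := by exact_mod_cast hx1
  have hS1 := sum1_le h23 h1 i x
  have hS2 := sum2_le h23 h1 x (N^d) hx1
  have hS2nn : 0 ≤ ∑ y ∈ Finset.Icc x (N^d), Real.exp (-(y:ℝ)^α) :=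
    Finset.sum_nonneg fun y _ => (Real.exp_pos _).le
  have hgnn : 0 ≤ gS1 α x := gS1_nonneg α x
  have ha1 : fS2 α x ≤ 2 := aux1 h23 h1 hx1'
  have ha2 : gS1 α x * fS2 α x ≤ 2 := by
    have := aux2 h23 h1 hx1'
    unfold gS1 fS2
    linarith [aux2 h23 h1 hx1']
  have hexp15 : Real.exp 14 * Real.exp 1 = Real.exp 15 := by
    rw [← Real.exp_add]; norm_num
  have hexp2 : Real.exp 1 * Real.exp 1 = Real.exp 2 := by
    rw [← Real.exp_add]; norm_num
  have hfnn : 0 ≤ fS2 α x := fS2_nonneg α x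
  calc (∑ y ∈ Finset.Icc (i+1) x,
        Real.exp ((y:ℝ)^α) * ((max y 1 : ℕ) : ℝ)^(-α)) *
      (∑ y ∈ Finset.Icc x (N^d), Real.exp (-(y:ℝ)^α))
      ≤ (14 * Real.exp 14 + 3 * Real.exp 1 * gS1 α x) *
        (∑ y ∈ Finset.Icc x (N^d), Real.exp (-(y:ℝ)^α)) :=
        mul_le_mul_of_nonneg_right hS1 hS2nn
    _ ≤ (14 * Real.exp 14 + 3 * Real.exp 1 * gS1 α x) *
        (30 * Real.exp 1 * fS2 α x) := by
        apply mul_le_mul_of_nonneg_left hS2 (by positivity)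
    _ = 420 * Real.exp 15 * fS2 α x +
        90 * Real.exp 2 * (gS1 α x * fS2 α x) := by
        rw [← hexp15, ← hexp2]; ring
    _ ≤ 420 * Real.exp 15 * 2 + 90 * Real.exp 2 * 2 := by
        have t1 : 420 * Real.exp 15 * fS2 α x ≤ 420 * Real.exp 15 * 2 :=
          mul_le_mul_of_nonneg_left ha1 (by positivity)
        have t2 : 90 * Real.exp 2 * (gS1 α x * fS2 α x) ≤ 90 * Real.exp 2 * 2 :=
          mul_le_mul_of_nonneg_left ha2 (by positivity)
        linarith
    _ = 840 * Real.exp 15 + 180 * Real.exp 2 := by ring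

end
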